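/- Let $b \geq 4$, $r \in [1/b, 1)$, and let $M \subseteq \{0,\dots,b-2\}$ be a set of missing digits with $0 \in M$, $M$ containing no two consecutive integers, and such that $D := \{0,\dots,b-1\} \setminus M$ is a union of blocks of consecutive integers each of length at least $br$. Then the thickness of $\mathcal{C}_{b,D} := \{x \in [0,1] : x = \sum_{i<0} c_i b^i, \ c_i \in D\}$ is at least $r(b-2)$. -/

import Mathlib

/-- Newhouse thickness of a compact set `C ⊆ ℝ`: for each bounded gap `(a,b)` of `C`,
the left piece extends from `a` leftwards to the nearest right-endpoint of a gap of
length at least `b - a` (or to `sInf C`), similarly for the right piece; the thickness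
is the infimum over all gaps of `min |L| |R| / |G|`. -/
noncomputable def thickness (C : Set ℝ) : ℝ :=
  sInf { t : ℝ | ∃ a b : ℝ, a ∈ C ∧ b ∈ C ∧ a < b ∧ Set.Ioo a b ∩ C = ∅ ∧
    t = min
      (a - sSup (insert (sInf C)
        {d : ℝ | ∃ c : ℝ, c ∈ C ∧ d ∈ C ∧ c < d ∧ d ≤ a ∧ b - a ≤ d - c ∧ Set.Ioo c d ∩ C = ∅}))
      (sInf (insert (sSup C)
        {c : ℝ | ∃ d : ℝ, c ∈ C ∧ d ∈ C ∧ c < d ∧ b ≤ c ∧ b - a ≤ d - c ∧ Set.Ioo c d ∩ C = ∅}) - b)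
      / (b - a) }


/-- The set of reals in `[0,1]` admitting a base-`b` expansion with all digits in `D`. -/
noncomputable def CbD (b : ℕ) (D : Finset ℕ) : Set ℝ :=
  {x : ℝ | x ∈ Set.Icc (0 : ℝ) 1 ∧ ∃ c : ℕ → ℕ, (∀ i, c i ∈ D) ∧
    x = ∑' i : ℕ, (c i : ℝ) / (b : ℝ) ^ (i + 1)}

namespace ThickAux

/-- value of a digit sequence in base b -/
noncomputable def val (b : ℕ) (σ : ℕ → ℕ) : ℝ := ∑' i, (σ i : ℝ) / (b:ℝ)^(i+1)

/-- prefix sum -/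
noncomputable def valP (b : ℕ) (n : ℕ) (σ : ℕ → ℕ) : ℝ :=
  ∑ i ∈ Finset.range n, (σ i : ℝ) / (b:ℝ)^(i+1)

variable {b : ℕ}

lemma ypos (hb : 2 ≤ b) : (0:ℝ) < (b:ℝ) := by
  have : (2:ℝ) ≤ (b:ℝ) := by exact_mod_cast hb
  linarith

lemma ygt1 (hb : 2 ≤ b) : (1:ℝ) < (b:ℝ) := by
  have : (2:ℝ) ≤ (b:ℝ) := by exact_mod_cast hb
  linarith

lemma xpos (hb : 2 ≤ b) : (0:ℝ) < ((b:ℝ) - 1)⁻¹ := by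
  have := ygt1 (b := b) hb
  exact inv_pos.mpr (by linarith)

lemma xle1 (hb : 2 ≤ b) : ((b:ℝ) - 1)⁻¹ ≤ 1 := by
  have h := ygt1 (b := b) hb
  rw [inv_eq_one_div, div_le_one (by linarith)]
  have : (2:ℝ) ≤ (b:ℝ) := by exact_mod_cast hb
  linarith

lemma ymulx (hb : 2 ≤ b) : (b:ℝ) * ((b:ℝ) - 1)⁻¹ = 1 + ((b:ℝ) - 1)⁻¹ := by
  have h := ygt1 (b := b) hb
  have h2 : (b:ℝ) - 1 ≠ 0 := by linarith
  field_simp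
  ring

lemma geom_term (hb : 2 ≤ b) (i : ℕ) : ((b:ℝ)⁻¹)^i = (b:ℝ) / (b:ℝ)^(i+1) := by
  have hy := ypos hb
  rw [inv_pow, pow_succ]; field_simp

lemma summable_geom (hb : 2 ≤ b) : Summable (fun i : ℕ => ((b:ℝ)⁻¹)^i) :=
  summable_geometric_of_lt_one (by positivity)
    (by rw [inv_lt_one_iff₀]; right; exact ygt1 hb)

lemma summable_val (hb : 2 ≤ b) {σ : ℕ → ℕ} (hσ : ∀ i, σ i < b) :
    Summable (fun i => (σ i : ℝ) / (b:ℝ)^(i+1)) := by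
  have hy := ypos hb
  apply Summable.of_nonneg_of_le (fun i => by positivity) (fun i => ?_) (summable_geom hb)
  rw [geom_term hb i]
  apply div_le_div_of_nonneg_right ?_ (by positivity)
  exact_mod_cast (hσ i).le

lemma summable_tail (hb : 2 ≤ b) {σ : ℕ → ℕ} (hσ : ∀ i, σ i < b) (k : ℕ) :
    Summable (fun i => (σ (i + k) : ℝ) / (b:ℝ)^(i + k + 1)) :=
  (summable_nat_add_iff (f := fun n => (σ n : ℝ)/(b:ℝ)^(n+1)) k).mpr (summable_val hb hσ)

lemma summable_tail_const (hb : 2 ≤ b) (c : ℝ) (k : ℕ) :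
    Summable (fun i : ℕ => c / (b:ℝ)^(i + k + 1)) := by
  have hy := ypos hb
  have h1 : (fun i : ℕ => c / (b:ℝ)^(i + k + 1)) = fun i : ℕ => (c / (b:ℝ)^(k+1)) * ((b:ℝ)⁻¹)^i := by
    funext i
    have e : (b:ℝ)^(i+k+1) = (b:ℝ)^(k+1) * (b:ℝ)^i := by rw [← pow_add]; congr 1; omega
    rw [e, div_mul_eq_div_div, div_eq_mul_inv, inv_pow]
  rw [h1]
  exact (summable_geom hb).mul_left _

lemma val_eq_valP_add (hb : 2 ≤ b) {σ : ℕ → ℕ} (hσ : ∀ i, σ i < b) (k : ℕ) :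
    val b σ = valP b k σ + ∑' i, (σ (i + k) : ℝ) / (b:ℝ)^(i + k + 1) := by
  rw [val, valP, ← (summable_val hb hσ).sum_add_tsum_nat_add k]

lemma tsum_tail_const (hb : 2 ≤ b) (k : ℕ) (c : ℝ) :
    ∑' i : ℕ, c / (b:ℝ)^(i + k + 1) = c * ((b:ℝ) - 1)⁻¹ / (b:ℝ)^k := by
  have hy := ypos hb
  have h1 : ∀ i : ℕ, c / (b:ℝ)^(i + k + 1) = (c / (b:ℝ)^(k+1)) * ((b:ℝ)⁻¹)^i := by
    intro i
    have e : (b:ℝ)^(i+k+1) = (b:ℝ)^(k+1) * (b:ℝ)^i := by rw [← pow_add]; congr 1; omega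
    rw [e, div_mul_eq_div_div, div_eq_mul_inv, inv_pow]
  rw [tsum_congr h1, tsum_mul_left, tsum_geometric_of_lt_one (by positivity)
    (by rw [inv_lt_one_iff₀]; right; exact ygt1 hb)]
  have h2 : ((b:ℝ) - 1) ≠ 0 := by have := ygt1 (b := b) hb; linarith
  have hy1 : ((1:ℝ) - (b:ℝ)⁻¹)⁻¹ = (b:ℝ) / ((b:ℝ) - 1) := by
    rw [← inv_div]
    congr 1
    field_simp
  rw [hy1, pow_succ]
  field_simp

lemma tail_le (hb : 2 ≤ b) {σ : ℕ → ℕ} (hσ : ∀ i, σ i < b) (k : ℕ) :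
    ∑' i, (σ (i + k) : ℝ) / (b:ℝ)^(i + k + 1) ≤ 1 / (b:ℝ)^k := by
  have hy := ypos hb
  have h2 : ((b:ℝ) - 1) ≠ 0 := by have := ygt1 (b := b) hb; linarith
  have hle : ∑' i, (σ (i + k) : ℝ) / (b:ℝ)^(i + k + 1)
      ≤ ∑' i : ℕ, ((b:ℝ) - 1) / (b:ℝ)^(i + k + 1) := by
    apply Summable.tsum_le_tsum ?_ (summable_tail hb hσ k) (summable_tail_const hb _ k)
    intro i
    apply div_le_div_of_nonneg_right ?_ (by positivity)
    have h3 : σ (i + k) ≤ b - 1 := Nat.le_sub_one_of_lt (hσ _)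
    have h4 : (σ (i+k) : ℝ) ≤ ((b - 1 : ℕ) : ℝ) := by exact_mod_cast h3
    rw [Nat.cast_sub (by omega)] at h4
    simpa using h4
  rw [tsum_tail_const hb k ((b:ℝ) - 1)] at hle
  calc ∑' i, (σ (i + k) : ℝ) / (b:ℝ)^(i + k + 1) ≤ _ := hle
    _ = 1 / (b:ℝ)^k := by field_simp

lemma tail_ge (hb : 2 ≤ b) {σ : ℕ → ℕ} (hσ1 : ∀ i, 1 ≤ σ i) (hσ : ∀ i, σ i < b) (k : ℕ) :
    ((b:ℝ) - 1)⁻¹ / (b:ℝ)^k ≤ ∑' i, (σ (i + k) : ℝ) / (b:ℝ)^(i + k + 1) := by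
  have hy := ypos hb
  have hge : ∑' i : ℕ, (1:ℝ) / (b:ℝ)^(i + k + 1)
      ≤ ∑' i, (σ (i + k) : ℝ) / (b:ℝ)^(i + k + 1) := by
    apply Summable.tsum_le_tsum ?_ (summable_tail_const hb _ k) (summable_tail hb hσ k)
    intro i
    apply div_le_div_of_nonneg_right ?_ (by positivity)
    exact_mod_cast hσ1 (i + k)
  rw [tsum_tail_const hb k 1] at hge
  calc ((b:ℝ) - 1)⁻¹ / (b:ℝ)^k = 1 * ((b:ℝ)-1)⁻¹ / (b:ℝ)^k := by ring
    _ ≤ _ := hge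

end ThickAux

namespace Part2

open ThickAux

variable {b : ℕ}

lemma valP_succ (n : ℕ) (σ : ℕ → ℕ) :
    valP b (n+1) σ = valP b n σ + (σ n : ℝ) / (b:ℝ)^(n+1) :=
  Finset.sum_range_succ _ n

lemma valP_congr {n : ℕ} {σ τ : ℕ → ℕ} (h : ∀ i, i < n → σ i = τ i) :
    valP b n σ = valP b n τ := by
  apply Finset.sum_congr rfl
  intro i hi
  rw [h i (Finset.mem_range.mp hi)]

lemma valP_nonneg (hb : 2 ≤ b) (n : ℕ) (σ : ℕ → ℕ) : 0 ≤ valP b n σ := by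
  have hy := ypos hb
  apply Finset.sum_nonneg
  intro i _
  positivity

lemma valP_mono (hb : 2 ≤ b) {k j : ℕ} (h : k ≤ j) (σ : ℕ → ℕ) :
    valP b k σ ≤ valP b j σ := by
  have hy := ypos hb
  apply Finset.sum_le_sum_of_subset_of_nonneg (Finset.range_subset_range.mpr h)
  intro i _ _
  positivity

lemma valP_Ico (k j : ℕ) (h : k ≤ j) (σ : ℕ → ℕ) :
    valP b j σ = valP b k σ + ∑ i ∈ Finset.Ico k j, (σ i : ℝ) / (b:ℝ)^(i+1) := by
  rw [valP, valP, Finset.range_eq_Ico, Finset.range_eq_Ico]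
  exact (Finset.sum_Ico_consecutive (fun i => (σ i : ℝ) / (b:ℝ)^(i+1)) (Nat.zero_le k) h).symm

lemma sum_Ico_top (hb : 2 ≤ b) (k j : ℕ) (h : k ≤ j) :
    ∑ i ∈ Finset.Ico k j, ((b:ℝ) - 1) / (b:ℝ)^(i+1) = 1/(b:ℝ)^k - 1/(b:ℝ)^j := by
  have hy := ypos hb
  induction j with
  | zero =>
      have : k = 0 := Nat.le_zero.mp h
      subst this; simp
  | succ j ih =>
      rcases Nat.lt_or_ge k (j+1) with hk | hk
      · have hkj : k ≤ j := by omega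
        rw [Finset.sum_Ico_succ_top hkj, ih hkj]
        have h1 : (b:ℝ)^(j+1) ≠ 0 := by positivity
        have h2 : (b:ℝ)^j ≠ 0 := by positivity
        field_simp
        ring
      · have : k = j + 1 := by omega
        subst this; simp

lemma val_lower (hb : 2 ≤ b) {σ : ℕ → ℕ} (hσ1 : ∀ i, 1 ≤ σ i) (hσ : ∀ i, σ i < b) (n : ℕ) :
    valP b n σ + ((σ n : ℝ) + ((b:ℝ)-1)⁻¹) / (b:ℝ)^(n+1) ≤ val b σ := by
  have h := val_eq_valP_add hb hσ (n+1)
  have ht := tail_ge hb hσ1 hσ (n+1)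
  rw [h, valP_succ, add_div]
  have : ((b:ℝ)-1)⁻¹ / (b:ℝ)^(n+1) ≤ ∑' i, (σ (i + (n+1)) : ℝ) / (b:ℝ)^(i + (n+1) + 1) := ht
  linarith

lemma val_upper (hb : 2 ≤ b) {σ : ℕ → ℕ} (hσ : ∀ i, σ i < b) (n : ℕ) :
    val b σ ≤ valP b n σ + ((σ n : ℝ) + 1) / (b:ℝ)^(n+1) := by
  have h := val_eq_valP_add hb hσ (n+1)
  have ht := tail_le hb hσ (n+1)
  rw [h, valP_succ, add_div]
  linarith

lemma val_all_bot (hb : 2 ≤ b) {σ : ℕ → ℕ} (hσ : ∀ i, σ i < b) (n : ℕ)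
    (h1 : ∀ i, n < i → σ i = 1) :
    val b σ = valP b n σ + ((σ n : ℝ) + ((b:ℝ)-1)⁻¹) / (b:ℝ)^(n+1) := by
  have h := val_eq_valP_add hb hσ (n+1)
  rw [h, valP_succ, add_div]
  have h2 : ∀ i : ℕ, (σ (i + (n+1)) : ℝ) / (b:ℝ)^(i + (n+1) + 1) = 1 / (b:ℝ)^(i + (n+1) + 1) := by
    intro i
    rw [h1 (i + (n+1)) (by omega)]
    norm_num
  rw [tsum_congr h2, tsum_tail_const hb (n+1) 1]
  ring

lemma val_all_top (hb : 2 ≤ b) {σ : ℕ → ℕ} (hσ : ∀ i, σ i < b) (n : ℕ)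
    (h1 : ∀ i, n < i → σ i = b - 1) :
    val b σ = valP b n σ + ((σ n : ℝ) + 1) / (b:ℝ)^(n+1) := by
  have h := val_eq_valP_add hb hσ (n+1)
  rw [h, valP_succ, add_div]
  have h2 : ∀ i : ℕ, (σ (i + (n+1)) : ℝ) / (b:ℝ)^(i + (n+1) + 1)
      = ((b:ℝ) - 1) / (b:ℝ)^(i + (n+1) + 1) := by
    intro i
    rw [h1 (i + (n+1)) (by omega)]
    rw [Nat.cast_sub (by omega)]
    norm_num
  rw [tsum_congr h2, tsum_tail_const hb (n+1) ((b:ℝ) - 1)]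
  have h3 : ((b:ℝ) - 1) ≠ 0 := by have := ygt1 (b := b) hb; linarith
  field_simp
  ring

lemma val_nonneg (hb : 2 ≤ b) (σ : ℕ → ℕ) : 0 ≤ val b σ := by
  have hy := ypos hb
  apply tsum_nonneg
  intro i
  positivity

lemma val_le_one (hb : 2 ≤ b) {σ : ℕ → ℕ} (hσ : ∀ i, σ i < b) : val b σ ≤ 1 := by
  have h := val_eq_valP_add hb hσ 0
  have ht := tail_le hb hσ 0
  simp only [valP, Finset.range_zero, Finset.sum_empty, zero_add] at h
  rw [h]
  calc ∑' i, (σ (i + 0) : ℝ) / (b:ℝ)^(i + 0 + 1) ≤ 1 / (b:ℝ)^0 := ht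
    _ = 1 := by norm_num

end Part2

namespace Part3

open ThickAux Part2

variable {b : ℕ}

lemma div_pow_shift (hb : 2 ≤ b) (c : ℝ) (n : ℕ) :
    c / (b:ℝ)^n = (c * (b:ℝ)) / (b:ℝ)^(n+1) := by
  have hy := ypos hb
  rw [pow_succ, mul_div_mul_right _ _ (ne_of_gt hy)]

lemma prefix_force (hb : 4 ≤ b) {p τ : ℕ → ℕ}
    (hp1 : ∀ i, 1 ≤ p i) (hp : ∀ i, p i < b)
    (hτ1 : ∀ i, 1 ≤ τ i) (hτ : ∀ i, τ i < b) (n : ℕ)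
    (h1 : valP b n p + ((b:ℝ)-1)⁻¹/(b:ℝ)^n ≤ val b τ)
    (h2 : val b τ ≤ valP b n p + 1/(b:ℝ)^n) : ∀ i, i < n → τ i = p i := by
  have hb2 : 2 ≤ b := by omega
  have hy := ypos hb2
  have hx := xpos hb2
  have hxy := ymulx hb2
  induction n with
  | zero => omega
  | succ n ih =>
      have hu : (0:ℝ) < (b:ℝ)^(n+1) := by positivity
      rw [valP_succ] at h1 h2
      have hpn1 : (1:ℝ) ≤ (p n : ℝ) := by exact_mod_cast hp1 n
      have hpnb : (p n : ℝ) + 1 ≤ (b:ℝ) := by exact_mod_cast hp n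
      have hsh1 : valP b n p + ((b:ℝ)-1)⁻¹/(b:ℝ)^n ≤ val b τ := by
        have key : ((b:ℝ)-1)⁻¹ / (b:ℝ)^n
            ≤ (p n : ℝ)/(b:ℝ)^(n+1) + ((b:ℝ)-1)⁻¹/(b:ℝ)^(n+1) := by
          rw [div_pow_shift hb2 _ n, ← add_div]
          apply div_le_div_of_nonneg_right ?_ hu.le |>.trans (le_refl _)
          rw [mul_comm, hxy]
          linarith
        linarith
      have hsh2 : val b τ ≤ valP b n p + 1/(b:ℝ)^n := by
        have key : (p n : ℝ)/(b:ℝ)^(n+1) + 1/(b:ℝ)^(n+1) ≤ 1/(b:ℝ)^n := by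
          rw [div_pow_shift hb2 1 n, one_mul, ← add_div]
          apply div_le_div_of_nonneg_right hpnb hu.le |>.trans (le_refl _)
        linarith
      have ihh := ih hsh1 hsh2
      intro i hi
      rcases Nat.lt_or_ge i n with h | h
      · exact ihh i h
      · have hin : i = n := by omega
        subst hin
        have e : valP b i τ = valP b i p := valP_congr ihh
        have lo := val_lower hb2 hτ1 hτ i
        have up := val_upper hb2 hτ i
        rw [e, add_div] at lo up
        have hui : (0:ℝ) < (b:ℝ)^(i+1) := by positivity
        have c1 : ((τ i : ℝ) + ((b:ℝ)-1)⁻¹) / (b:ℝ)^(i+1)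
            ≤ ((p i : ℝ) + 1) / (b:ℝ)^(i+1) := by
          rw [add_div, add_div]
          linarith
        have c2 : ((p i : ℝ) + ((b:ℝ)-1)⁻¹) / (b:ℝ)^(i+1)
            ≤ ((τ i : ℝ) + 1) / (b:ℝ)^(i+1) := by
          rw [add_div, add_div]
          linarith
        have c1' := (div_le_div_iff_of_pos_right hui).mp c1
        have c2' := (div_le_div_iff_of_pos_right hui).mp c2
        have d1 : (τ i : ℝ) < (p i : ℝ) + 1 := by linarith
        have d2 : (p i : ℝ) < (τ i : ℝ) + 1 := by linarith
        have d1' : τ i < p i + 1 := by exact_mod_cast d1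
        have d2' : p i < τ i + 1 := by exact_mod_cast d2
        omega

end Part3

namespace Part4

open ThickAux Part2 Part3

variable {b : ℕ} {Ms : Finset ℕ}

/-- digits are between 1 and b-1 -/
lemma digit_ge1 (h0 : 0 ∈ Ms) {d : ℕ} (hd : d ∈ Finset.range b \ Ms) : 1 ≤ d := by
  rcases Finset.mem_sdiff.mp hd with ⟨_, h2⟩
  rcases Nat.eq_zero_or_pos d with h | h
  · exact absurd (h ▸ h0) h2
  · exact h

lemma digit_ltb {d : ℕ} (hd : d ∈ Finset.range b \ Ms) : d < b :=
  Finset.mem_range.mp (Finset.mem_sdiff.mp hd).1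

lemma mem_D_iff {d : ℕ} : d ∈ Finset.range b \ Ms ↔ d < b ∧ d ∉ Ms := by
  simp [Finset.mem_sdiff]

lemma top_mem (hb : 4 ≤ b) (hMsub : Ms ⊆ Finset.range (b-1)) :
    b - 1 ∈ Finset.range b \ Ms := by
  rw [mem_D_iff]
  constructor
  · omega
  · intro h
    have := Finset.mem_range.mp (hMsub h)
    omega

lemma one_mem (hb : 4 ≤ b) (h0 : 0 ∈ Ms) (hnc : ∀ m ∈ Ms, m + 1 ∉ Ms) :
    1 ∈ Finset.range b \ Ms := by
  rw [mem_D_iff]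
  exact ⟨by omega, hnc 0 h0⟩

lemma val_mem_CbD (hb : 4 ≤ b) (h0 : 0 ∈ Ms) {σ : ℕ → ℕ}
    (hσ : ∀ i, σ i ∈ Finset.range b \ Ms) : val b σ ∈ CbD b (Finset.range b \ Ms) := by
  have hb2 : 2 ≤ b := by omega
  refine ⟨⟨val_nonneg hb2 σ, val_le_one hb2 (fun i => digit_ltb (hσ i))⟩, σ, hσ, rfl⟩

lemma CbD_sub_Icc : CbD b (Finset.range b \ Ms) ⊆ Set.Icc (0:ℝ) 1 := fun _ h => h.1

lemma mem_CbD_elim {z : ℝ} (hz : z ∈ CbD b (Finset.range b \ Ms)) :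
    ∃ σ : ℕ → ℕ, (∀ i, σ i ∈ Finset.range b \ Ms) ∧ z = val b σ := by
  obtain ⟨_, σ, hσ, hval⟩ := hz
  exact ⟨σ, hσ, hval⟩

/-- strict monotonicity wrt first differing digit -/
lemma val_lt_of_digit_lt (hb : 4 ≤ b) (h0 : 0 ∈ Ms) {α β : ℕ → ℕ}
    (hα : ∀ i, α i ∈ Finset.range b \ Ms) (hβ : ∀ i, β i ∈ Finset.range b \ Ms)
    (k : ℕ) (hpre : ∀ i, i < k → α i = β i) (hk : α k + 1 ≤ β k) :
    val b α < val b β := by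
  have hb2 : 2 ≤ b := by omega
  have hx := xpos hb2
  have hu : (0:ℝ) < (b:ℝ)^(k+1) := by positivity
  have h1 := val_upper hb2 (fun i => digit_ltb (hα i)) k
  have h2 := val_lower hb2 (fun i => digit_ge1 h0 (hβ i)) (fun i => digit_ltb (hβ i)) k
  have e : valP b k α = valP b k β := valP_congr hpre
  have hc : ((α k : ℝ) + 1) ≤ (β k : ℝ) := by exact_mod_cast hk
  have hd : ((α k : ℝ) + 1) / (b:ℝ)^(k+1) < ((β k : ℝ) + ((b:ℝ)-1)⁻¹) / (b:ℝ)^(k+1) := by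
    apply div_lt_div_of_pos_right ?_ hu |>.trans_le (le_refl _)
    linarith
  calc val b α ≤ valP b k α + ((α k : ℝ) + 1) / (b:ℝ)^(k+1) := h1
    _ < valP b k β + ((β k : ℝ) + ((b:ℝ)-1)⁻¹) / (b:ℝ)^(k+1) := by rw [e]; linarith
    _ ≤ val b β := h2

/-- characterization of gaps -/
lemma gap_char (hb : 4 ≤ b) (hMsub : Ms ⊆ Finset.range (b-1)) (h0 : 0 ∈ Ms)
    (hnc : ∀ m ∈ Ms, m + 1 ∉ Ms) {σ τ : ℕ → ℕ}
    (hσ : ∀ i, σ i ∈ Finset.range b \ Ms) (hτ : ∀ i, τ i ∈ Finset.range b \ Ms)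
    (hlt : val b σ < val b τ)
    (hgap : Set.Ioo (val b σ) (val b τ) ∩ CbD b (Finset.range b \ Ms) = ∅) :
    ∃ n, (∀ i, i < n → σ i = τ i) ∧ σ n < τ n ∧ τ n ≤ σ n + 2 ∧
      (∀ e, e ∈ Finset.range b \ Ms → ¬(σ n < e ∧ e < τ n)) ∧
      (∀ i, n < i → σ i = b - 1) ∧ (∀ i, n < i → τ i = 1) := by
  have hb2 : 2 ≤ b := by omega
  have hy := ypos hb2
  have hx := xpos hb2
  have hx1 := xle1 hb2
  have hxy := ymulx hb2
  have hσ1 : ∀ i, 1 ≤ σ i := fun i => digit_ge1 h0 (hσ i)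
  have hσb : ∀ i, σ i < b := fun i => digit_ltb (hσ i)
  have hτ1 : ∀ i, 1 ≤ τ i := fun i => digit_ge1 h0 (hτ i)
  have hτb : ∀ i, τ i < b := fun i => digit_ltb (hτ i)
  have hmem : ∀ ρ : ℕ → ℕ, (∀ i, ρ i ∈ Finset.range b \ Ms) →
      val b σ < val b ρ → val b ρ < val b τ → False := by
    intro ρ hρ hl hr
    have : val b ρ ∈ Set.Ioo (val b σ) (val b τ) ∩ CbD b (Finset.range b \ Ms) :=
      ⟨⟨hl, hr⟩, val_mem_CbD hb h0 hρ⟩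
    rw [hgap] at this
    exact this
  -- least differing index
  have hne : ∃ k, σ k ≠ τ k := by
    by_contra h
    push_neg at h
    have : σ = τ := funext h
    rw [this] at hlt
    exact lt_irrefl _ hlt
  classical
  let n := Nat.find hne
  have hnd : σ n ≠ τ n := Nat.find_spec hne
  have hpre : ∀ i, i < n → σ i = τ i := by
    intro i hi
    by_contra h
    have : Nat.find hne ≤ i := Nat.find_le h
    omega
  have hstn : σ n < τ n := by
    rcases Nat.lt_or_ge (σ n) (τ n) with h | h
    · exact h
    · have : τ n + 1 ≤ σ n := by omega
      have := val_lt_of_digit_lt hb h0 hτ hσ n (fun i hi => (hpre i hi).symm) this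
      linarith
  -- no intermediate digit
  have hnomid : ∀ e, e ∈ Finset.range b \ Ms → ¬(σ n < e ∧ e < τ n) := by
    rintro e he ⟨h1, h2⟩
    set ρ : ℕ → ℕ := fun i => if i < n then σ i else if i = n then e else 1 with hρdef
    have hρ : ∀ i, ρ i ∈ Finset.range b \ Ms := by
      intro i
      simp only [hρdef]
      split
      · exact hσ i
      · split
        · exact he
        · exact one_mem hb h0 hnc
    have hρn : ρ n = e := by simp [hρdef]
    have l1 : val b σ < val b ρ := by
      apply val_lt_of_digit_lt hb h0 hσ hρ n
      · intro i hi; simp [hρdef, hi]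
      · rw [hρn]; omega
    have l2 : val b ρ < val b τ := by
      apply val_lt_of_digit_lt hb h0 hρ hτ n
      · intro i hi; simp only [hρdef]; rw [if_pos hi]; exact hpre i hi
      · rw [hρn]; omega
    exact hmem ρ hρ l1 l2
  -- gap of at most one digit
  have hwid : τ n ≤ σ n + 2 := by
    by_contra h
    push_neg at h
    have m1 : σ n + 1 ∉ Finset.range b \ Ms := by
      intro hm; exact hnomid _ hm ⟨by omega, by omega⟩
    have m2 : σ n + 2 ∉ Finset.range b \ Ms := by
      intro hm; exact hnomid _ hm ⟨by omega, by omega⟩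
    have hb1 : σ n + 1 < b := by have := hτb n; omega
    have hb2' : σ n + 2 < b := by have := hτb n; omega
    have i1 : σ n + 1 ∈ Ms := by
      rcases mem_D_iff.not.mp m1 with h'
      push_neg at h'
      exact h' hb1
    have i2 : σ n + 2 ∈ Ms := by
      rcases mem_D_iff.not.mp m2 with h'
      push_neg at h'
      exact h' hb2'
    exact hnc _ i1 i2
  -- σ tail is all b-1
  have htσ : ∀ i, n < i → σ i = b - 1 := by
    by_contra hcon
    push_neg at hcon
    have hex : ∃ j, n < j ∧ σ j ≠ b - 1 := hcon
    let j := Nat.find hex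
    obtain ⟨hj1, hj2⟩ : n < j ∧ σ j ≠ b - 1 := Nat.find_spec hex
    have hjmin : ∀ i, n < i → i < j → σ i = b - 1 := by
      intro i h1 h2
      by_contra h
      have hh : n < i ∧ σ i ≠ b - 1 := ⟨h1, h⟩
      have : Nat.find hex ≤ i := Nat.find_le hh
      omega
    -- successor digit e of σ j
    have hsucc : ∃ e, e ∈ Finset.range b \ Ms ∧ σ j < e ∧ e ≤ σ j + 2 := by
      by_cases hc : σ j + 1 ∈ Finset.range b \ Ms
      · exact ⟨σ j + 1, hc, by omega, by omega⟩
      · have hlt1 : σ j + 1 < b := by have := hσb j; omega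
        have hm1 : σ j + 1 ∈ Ms := by
          rcases mem_D_iff.not.mp hc with h'
          push_neg at h'
          exact h' hlt1
        have hm2 : σ j + 2 ∉ Ms := hnc _ hm1
        have hlt2 : σ j + 2 < b := by
          have := Finset.mem_range.mp (hMsub hm1); omega
        exact ⟨σ j + 2, mem_D_iff.mpr ⟨hlt2, hm2⟩, by omega, by omega⟩
    obtain ⟨e, he, he1, he2⟩ := hsucc
    set ρ : ℕ → ℕ := fun i => if i < j then σ i else if i = j then e else 1 with hρdef
    have hρ : ∀ i, ρ i ∈ Finset.range b \ Ms := by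
      intro i
      simp only [hρdef]
      split
      · exact hσ i
      · split
        · exact he
        · exact one_mem hb h0 hnc
    have hρn : ρ j = e := by simp [hρdef]
    have l1 : val b σ < val b ρ := by
      apply val_lt_of_digit_lt hb h0 hσ hρ j
      · intro i hi; simp [hρdef, hi]
      · rw [hρn]; omega
    -- now show val ρ < val τ
    have hρb : ∀ i, ρ i < b := fun i => digit_ltb (hρ i)
    have eρ : val b ρ = valP b j ρ + ((e:ℝ) + ((b:ℝ)-1)⁻¹)/(b:ℝ)^(j+1) := by
      have := val_all_bot hb2 hρb j (fun i hi => by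
        simp only [hρdef]; rw [if_neg (by omega), if_neg (by omega)])
      rw [this, hρn]
    have eρP : valP b j ρ = valP b j σ := valP_congr (by
      intro i hi; simp [hρdef, hi])
    have esplit : valP b j σ = valP b (n+1) σ + (1/(b:ℝ)^(n+1) - 1/(b:ℝ)^j) := by
      rw [valP_Ico (n+1) j (by omega) σ]
      congr 1
      rw [← sum_Ico_top hb2 (n+1) j (by omega)]
      apply Finset.sum_congr rfl
      intro i hi
      rcases Finset.mem_Ico.mp hi with ⟨hi1, hi2⟩
      rw [hjmin i (by omega) hi2, Nat.cast_sub (by omega)]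
      norm_num
    have hτlo := val_lower hb2 hτ1 hτb n
    have eP : valP b n τ = valP b n σ := valP_congr (fun i hi => (hpre i hi).symm)
    have hτlo2 : valP b (n+1) σ + (1 + ((b:ℝ)-1)⁻¹)/(b:ℝ)^(n+1) ≤ val b τ := by
      rw [valP_succ]
      have hc : ((σ n : ℝ) + 1 + ((b:ℝ)-1)⁻¹) ≤ ((τ n:ℝ) + ((b:ℝ)-1)⁻¹) := by
        have : (σ n : ℝ) + 1 ≤ (τ n : ℝ) := by exact_mod_cast hstn
        linarith
      have hd : ((σ n : ℝ) + 1 + ((b:ℝ)-1)⁻¹)/(b:ℝ)^(n+1) ≤ ((τ n:ℝ) + ((b:ℝ)-1)⁻¹)/(b:ℝ)^(n+1) :=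
        div_le_div_of_nonneg_right hc (by positivity)
      rw [eP] at hτlo
      rw [add_div, add_div] at hd
      rw [add_div]
      linarith
    have hetop : ((e:ℝ) + ((b:ℝ)-1)⁻¹)/(b:ℝ)^(j+1) ≤ 1/(b:ℝ)^j := by
      rw [div_pow_shift hb2 1 j, one_mul]
      apply div_le_div_of_nonneg_right ?_ (by positivity)
      have : (e:ℝ) ≤ (b:ℝ) - 1 := by
        have := digit_ltb he
        have : (e:ℝ) + 1 ≤ (b:ℝ) := by exact_mod_cast this
        linarith
      linarith
    have l2 : val b ρ < val b τ := by
      rw [eρ, eρP, esplit]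
      have h1 : (1:ℝ)/(b:ℝ)^(n+1) < (1 + ((b:ℝ)-1)⁻¹)/(b:ℝ)^(n+1) :=
        div_lt_div_of_pos_right (by linarith) (by positivity)
      linarith
    exact hmem ρ hρ l1 l2
  -- τ tail is all 1
  have htτ : ∀ i, n < i → τ i = 1 := by
    by_contra hcon
    push_neg at hcon
    have hex : ∃ j, n < j ∧ τ j ≠ 1 := hcon
    let j := Nat.find hex
    obtain ⟨hj1, hj2⟩ : n < j ∧ τ j ≠ 1 := Nat.find_spec hex
    have hτj2 : 2 ≤ τ j := by have := hτ1 j; omega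
    -- predecessor digit e of τ j
    have hpred : ∃ e, e ∈ Finset.range b \ Ms ∧ 1 ≤ e ∧ e < τ j := by
      by_cases hc : τ j - 1 ∈ Finset.range b \ Ms
      · exact ⟨τ j - 1, hc, by omega, by omega⟩
      · have hlt1 : τ j - 1 < b := by have := hτb j; omega
        have hm1 : τ j - 1 ∈ Ms := by
          rcases mem_D_iff.not.mp hc with h'
          push_neg at h'
          exact h' hlt1
        have h1M : 1 ∉ Ms := hnc 0 h0
        have hge2 : 2 ≤ τ j - 1 := by
          rcases Nat.lt_or_ge (τ j - 1) 2 with h | h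
          · interval_cases h' : (τ j - 1)
            · omega
            · exact absurd (h' ▸ hm1) h1M
          · exact h
        have hm2 : τ j - 2 ∉ Ms := by
          intro h
          have := hnc _ h
          have e2 : τ j - 2 + 1 = τ j - 1 := by omega
          rw [e2] at this
          exact this hm1
        have hlt2 : τ j - 2 < b := by have := hτb j; omega
        exact ⟨τ j - 2, mem_D_iff.mpr ⟨hlt2, hm2⟩, by omega, by omega⟩
    obtain ⟨e, he, he1, he2⟩ := hpred
    set ρ : ℕ → ℕ := fun i => if i < j then τ i else if i = j then e else b - 1 with hρdef
    have hρ : ∀ i, ρ i ∈ Finset.range b \ Ms := by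
      intro i
      simp only [hρdef]
      split
      · exact hτ i
      · split
        · exact he
        · exact top_mem hb hMsub
    have hρn : ρ j = e := by simp [hρdef]
    have l2 : val b ρ < val b τ := by
      apply val_lt_of_digit_lt hb h0 hρ hτ j
      · intro i hi; simp [hρdef, hi]
      · rw [hρn]; omega
    have hρb : ∀ i, ρ i < b := fun i => digit_ltb (hρ i)
    have eρ : val b ρ = valP b j ρ + ((e:ℝ) + 1)/(b:ℝ)^(j+1) := by
      have := val_all_top hb2 hρb j (fun i hi => by
        simp only [hρdef]; rw [if_neg (by omega), if_neg (by omega)])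
      rw [this, hρn]
    have eρP : valP b j ρ = valP b j τ := valP_congr (by
      intro i hi; simp [hρdef, hi])
    have l1 : val b σ < val b ρ := by
      have h1 := val_upper hb2 hσb n
      have eP : valP b n σ = valP b n τ := valP_congr hpre
      have h2 : valP b n τ + ((σ n : ℝ) + 1)/(b:ℝ)^(n+1) ≤ valP b (n+1) τ := by
        rw [valP_succ]
        have : ((σ n:ℝ) + 1) ≤ (τ n : ℝ) := by exact_mod_cast hstn
        have := div_le_div_of_nonneg_right this (by positivity : (0:ℝ) ≤ (b:ℝ)^(n+1))
        linarith
      have h3 : valP b (n+1) τ ≤ valP b j τ := valP_mono hb2 (by omega) τ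
      have h4 : (0:ℝ) < ((e:ℝ) + 1)/(b:ℝ)^(j+1) := by positivity
      rw [eρ, eρP]
      rw [eP] at h1
      linarith
    exact hmem ρ hρ l1 l2
  exact ⟨n, hpre, hstn, hwid, hnomid, htσ, htτ⟩

end Part4

namespace Part5

open ThickAux Part2 Part3 Part4

variable {b : ℕ} {Ms : Finset ℕ}

lemma arith_key {y r ℓ : ℝ} (hy : 4 ≤ y) (hr1 : 1/y ≤ r) (hr2 : r < 1)
    (hl : y * r ≤ ℓ) : r * (y-2) * (y-1)⁻¹ * y ≤ ℓ - (y-1)⁻¹ := by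
  have hy0 : (0:ℝ) < y := by linarith
  have h1 : 1 ≤ y * r := by
    rw [div_le_iff₀ hy0] at hr1
    linarith [hr1]
  have ht0 : (0:ℝ) < (y-1)⁻¹ := by
    apply inv_pos.mpr; linarith
  have ht : (y-1)⁻¹ * (y-1) = 1 := by
    apply inv_mul_cancel₀; intro h; rw [sub_eq_zero] at h; linarith [h]
  have key : r * (y-2) * (y-1)⁻¹ * y + (y-1)⁻¹ ≤ y * r := by
    have h2 : r * (y-2) * (y-1)⁻¹ * y + (y-1)⁻¹ = (y-1)⁻¹ * (r*(y-2)*y + 1) := by ring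
    have h3 : y * r = (y-1)⁻¹ * (y*r*(y-1)) := by
      have : (y-1)⁻¹ * (y*r*(y-1)) = ((y-1)⁻¹ * (y-1)) * (y*r) := by ring
      rw [this, ht]; ring
    rw [h2, h3]
    apply mul_le_mul_of_nonneg_left ?_ ht0.le
    nlinarith [h1]
  linarith

/-- block above: if d ∈ D and d+1 ∉ D then the block of d is {a0,...,d} with
    d+1-a0 ≥ br -/
lemma block_top (hb : 4 ≤ b) {r : ℝ} (hr : r ∈ Set.Ico (1 / (b : ℝ)) 1) (h0 : 0 ∈ Ms)
    (hblocks : ∀ d ∈ Finset.range b \ Ms, ∃ a l : ℕ,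
      (b : ℝ) * r ≤ (l : ℝ) ∧ d ∈ Finset.Ico a (a + l) ∧
      Finset.Ico a (a + l) ⊆ Finset.range b \ Ms)
    {d : ℕ} (hd : d ∈ Finset.range b \ Ms) (hd1 : d + 1 ∉ Finset.range b \ Ms) :
    ∃ a0 : ℕ, 1 ≤ a0 ∧ a0 ≤ d ∧ (b:ℝ) * r ≤ (d:ℝ) + 1 - (a0:ℝ) ∧
      (∀ k, a0 ≤ k → k ≤ d → k ∈ Finset.range b \ Ms) := by
  obtain ⟨a0, l, hl, hmem, hsub⟩ := hblocks d hd
  rcases Finset.mem_Ico.mp hmem with ⟨h1, h2⟩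
  have hup : a0 + l ≤ d + 1 := by
    by_contra h
    push_neg at h
    exact hd1 (hsub (Finset.mem_Ico.mpr ⟨by omega, h⟩))
  have heq : a0 + l = d + 1 := by omega
  have ha01 : 1 ≤ a0 := by
    apply digit_ge1 h0 (hsub (Finset.mem_Ico.mpr ⟨le_refl _, by omega⟩))
  refine ⟨a0, ha01, by omega, ?_, ?_⟩
  · have : ((d:ℝ) + 1 - (a0:ℝ)) = (l:ℝ) := by
      have : (a0:ℝ) + (l:ℝ) = (d:ℝ) + 1 := by exact_mod_cast heq
      linarith
    rw [this]; exact hl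
  · intro k hk1 hk2
    exact hsub (Finset.mem_Ico.mpr ⟨hk1, by omega⟩)

/-- block below: if d ∈ D and d-1 ∉ D then the block of d is {d,...,d+l-1} -/
lemma block_bot (hb : 4 ≤ b) {r : ℝ} (hr : r ∈ Set.Ico (1 / (b : ℝ)) 1) (h0 : 0 ∈ Ms)
    (hblocks : ∀ d ∈ Finset.range b \ Ms, ∃ a l : ℕ,
      (b : ℝ) * r ≤ (l : ℝ) ∧ d ∈ Finset.Ico a (a + l) ∧
      Finset.Ico a (a + l) ⊆ Finset.range b \ Ms)
    {d : ℕ} (hd : d ∈ Finset.range b \ Ms) (hd1 : d - 1 ∉ Finset.range b \ Ms) (hd2 : 1 ≤ d) :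
    ∃ l : ℕ, 1 ≤ l ∧ d + l ≤ b ∧ (b:ℝ) * r ≤ (l : ℝ) ∧
      (∀ k, d ≤ k → k < d + l → k ∈ Finset.range b \ Ms) := by
  obtain ⟨a0, l, hl, hmem, hsub⟩ := hblocks d hd
  rcases Finset.mem_Ico.mp hmem with ⟨h1, h2⟩
  have hlow : d ≤ a0 := by
    by_contra h
    push_neg at h
    have : d - 1 ∈ Finset.Ico a0 (a0 + l) := Finset.mem_Ico.mpr ⟨by omega, by omega⟩
    exact hd1 (hsub this)
  have heq : a0 = d := by omega
  subst heq
  have hl1 : 1 ≤ l := by omega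
  have hub : a0 + l ≤ b := by
    have hmem2 : a0 + l - 1 ∈ Finset.Ico a0 (a0 + l) := Finset.mem_Ico.mpr ⟨by omega, by omega⟩
    have := digit_ltb (hsub hmem2)
    omega
  refine ⟨l, by omega, hub, hl, ?_⟩
  intro k hk1 hk2
  exact hsub (Finset.mem_Ico.mpr ⟨hk1, hk2⟩)

/-- constructor for gaps -/
lemma mk_gap (hb : 4 ≤ b) (h0 : 0 ∈ Ms) {σ τ : ℕ → ℕ} (n : ℕ)
    (hσ : ∀ i, σ i ∈ Finset.range b \ Ms) (hτ : ∀ i, τ i ∈ Finset.range b \ Ms)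
    (hpre : ∀ i, i < n → σ i = τ i) (hd : σ n < τ n)
    (hnomid : ∀ e, e ∈ Finset.range b \ Ms → ¬(σ n < e ∧ e < τ n))
    (htσ : ∀ i, n < i → σ i = b - 1) (htτ : ∀ i, n < i → τ i = 1) :
    val b σ < val b τ ∧ Set.Ioo (val b σ) (val b τ) ∩ CbD b (Finset.range b \ Ms) = ∅ := by
  have hb2 : 2 ≤ b := by omega
  have hy := ypos hb2
  have hx := xpos hb2
  have hxy := ymulx hb2
  have hσ1 : ∀ i, 1 ≤ σ i := fun i => digit_ge1 h0 (hσ i)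
  have hσb : ∀ i, σ i < b := fun i => digit_ltb (hσ i)
  have hτ1 : ∀ i, 1 ≤ τ i := fun i => digit_ge1 h0 (hτ i)
  have hτb : ∀ i, τ i < b := fun i => digit_ltb (hτ i)
  have hlt : val b σ < val b τ := val_lt_of_digit_lt hb h0 hσ hτ n hpre (by omega)
  refine ⟨hlt, ?_⟩
  rw [Set.eq_empty_iff_forall_notMem]
  rintro z ⟨⟨hz1, hz2⟩, hzC⟩
  obtain ⟨ρ, hρ, hzval⟩ := mem_CbD_elim hzC
  subst hzval
  have hρ1 : ∀ i, 1 ≤ ρ i := fun i => digit_ge1 h0 (hρ i)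
  have hρb : ∀ i, ρ i < b := fun i => digit_ltb (hρ i)
  have ea : val b σ = valP b n σ + ((σ n : ℝ) + 1)/(b:ℝ)^(n+1) := val_all_top hb2 hσb n htσ
  have eβ : val b τ = valP b n τ + ((τ n : ℝ) + ((b:ℝ)-1)⁻¹)/(b:ℝ)^(n+1) :=
    val_all_bot hb2 hτb n htτ
  have eP : valP b n τ = valP b n σ := valP_congr (fun i hi => (hpre i hi).symm)
  rw [eP] at eβ
  -- prefix force at level n
  have hpf : ∀ i, i < n → ρ i = σ i := by
    apply prefix_force hb hσ1 hσb hρ1 hρb n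
    · have e1 : ((b:ℝ)-1)⁻¹/(b:ℝ)^n = (((b:ℝ)-1)⁻¹ * (b:ℝ))/(b:ℝ)^(n+1) := div_pow_shift hb2 _ n
      rw [e1, mul_comm, hxy]
      have hx1 := xle1 hb2
      have h1 : (1 + ((b:ℝ)-1)⁻¹)/(b:ℝ)^(n+1) ≤ ((σ n : ℝ) + 1)/(b:ℝ)^(n+1) := by
        apply div_le_div_of_nonneg_right ?_ (by positivity)
        have : (1:ℝ) ≤ (σ n : ℝ) := by exact_mod_cast hσ1 n
        linarith
      rw [ea] at hz1
      linarith
    · have h1 : ((τ n : ℝ) + ((b:ℝ)-1)⁻¹)/(b:ℝ)^(n+1) ≤ (b:ℝ)/(b:ℝ)^(n+1) := by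
        apply div_le_div_of_nonneg_right ?_ (by positivity)
        have h2 : (τ n : ℝ) + 1 ≤ (b:ℝ) := by exact_mod_cast hτb n
        have := xle1 hb2
        linarith
      have e1 : (1:ℝ)/(b:ℝ)^n = (1 * (b:ℝ))/(b:ℝ)^(n+1) := div_pow_shift hb2 _ n
      rw [e1, one_mul]
      rw [eβ] at hz2
      linarith
  have ePρ : valP b n ρ = valP b n σ := valP_congr hpf
  have hu : (0:ℝ) < (b:ℝ)^(n+1) := by positivity
  -- digit of ρ at n
  have hup := val_upper hb2 hρb n
  have hlo := val_lower hb2 hρ1 hρb n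
  rw [ePρ] at hup hlo
  rw [ea] at hz1
  rw [eβ] at hz2
  have c1 : ((σ n:ℝ) + 1)/(b:ℝ)^(n+1) < ((ρ n:ℝ) + 1)/(b:ℝ)^(n+1) := by linarith
  have c2 : ((ρ n:ℝ) + ((b:ℝ)-1)⁻¹)/(b:ℝ)^(n+1) < ((τ n:ℝ) + ((b:ℝ)-1)⁻¹)/(b:ℝ)^(n+1) := by
    linarith
  have c1' := (div_lt_div_iff_of_pos_right hu).mp c1
  have c2' := (div_lt_div_iff_of_pos_right hu).mp c2
  have d1 : σ n < ρ n := by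
    have : (σ n:ℝ) < (ρ n:ℝ) := by linarith
    exact_mod_cast this
  have d2 : ρ n < τ n := by
    have : (ρ n:ℝ) < (τ n:ℝ) := by linarith
    exact_mod_cast this
  exact hnomid (ρ n) (hρ n) ⟨d1, d2⟩

end Part5

namespace Part6

open ThickAux Part2 Part3 Part4 Part5

variable {b : ℕ} {Ms : Finset ℕ}

/-- no long gap has its right endpoint in the window `(TL, a]` -/
lemma gapL (hb : 4 ≤ b) (hMsub : Ms ⊆ Finset.range (b-1)) (h0 : 0 ∈ Ms)
    (hnc : ∀ m ∈ Ms, m + 1 ∉ Ms) {q : ℕ → ℕ} (hq : ∀ i, q i ∈ Finset.range b \ Ms)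
    (j c : ℕ) (hc : c ∈ Finset.range b \ Ms) {a β γ z : ℝ}
    (hA_up : a ≤ valP b j q + 1/(b:ℝ)^j)
    (hΛ : ((b:ℝ)-1)⁻¹/(b:ℝ)^(j+1) < β - a)
    (hdig : ∀ w : ℕ, c < w → w - 1 ∈ Ms →
      ¬(valP b j q + ((w:ℝ)+((b:ℝ)-1)⁻¹)/(b:ℝ)^(j+1) ≤ a))
    (hγ : γ ∈ CbD b (Finset.range b \ Ms)) (hz : z ∈ CbD b (Finset.range b \ Ms))
    (hγz : γ < z) (hza : z ≤ a) (hlen : β - a ≤ z - γ)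
    (hioo : Set.Ioo γ z ∩ CbD b (Finset.range b \ Ms) = ∅) :
    z ≤ valP b j q + ((c:ℝ)+((b:ℝ)-1)⁻¹)/(b:ℝ)^(j+1) := by
  have hb2 : 2 ≤ b := by omega
  have hy := ypos hb2
  have hy1 : (1:ℝ) ≤ (b:ℝ) := (ygt1 hb2).le
  have hx := xpos hb2
  have hx1 := xle1 hb2
  have hxy := ymulx hb2
  have hq1 : ∀ i, 1 ≤ q i := fun i => digit_ge1 h0 (hq i)
  have hqb : ∀ i, q i < b := fun i => digit_ltb (hq i)
  have hc1 : 1 ≤ c := digit_ge1 h0 hc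
  have hcb : c < b := digit_ltb hc
  by_contra hcon
  push_neg at hcon
  obtain ⟨σ', hσ', hγval⟩ := mem_CbD_elim hγ
  obtain ⟨τ', hτ', hzval⟩ := mem_CbD_elim hz
  subst hγval hzval
  have hσ'1 : ∀ i, 1 ≤ σ' i := fun i => digit_ge1 h0 (hσ' i)
  have hσ'b : ∀ i, σ' i < b := fun i => digit_ltb (hσ' i)
  have hτ'1 : ∀ i, 1 ≤ τ' i := fun i => digit_ge1 h0 (hτ' i)
  have hτ'b : ∀ i, τ' i < b := fun i => digit_ltb (hτ' i)
  obtain ⟨m, hpre', hstn', hwid', hnomid', htσ', htτ'⟩ :=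
    gap_char hb hMsub h0 hnc hσ' hτ' hγz hioo
  have ez : val b τ' = valP b m τ' + ((τ' m : ℝ) + ((b:ℝ)-1)⁻¹)/(b:ℝ)^(m+1) :=
    val_all_bot hb2 hτ'b m htτ'
  have eγ : val b σ' = valP b m σ' + ((σ' m : ℝ) + 1)/(b:ℝ)^(m+1) :=
    val_all_top hb2 hσ'b m htσ'
  have eP' : valP b m σ' = valP b m τ' := valP_congr hpre'
  have ezγ : val b τ' - val b σ'
      = ((τ' m : ℝ) - (σ' m : ℝ) - 1 + ((b:ℝ)-1)⁻¹)/(b:ℝ)^(m+1) := by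
    rw [ez, eγ, eP']; ring
  -- m ≤ j
  have hmj : m ≤ j := by
    by_contra hm
    push_neg at hm
    have h1 : (τ' m : ℝ) - (σ' m : ℝ) - 1 + ((b:ℝ)-1)⁻¹ ≤ 1 + ((b:ℝ)-1)⁻¹ := by
      have : (τ' m : ℝ) ≤ (σ' m : ℝ) + 2 := by exact_mod_cast hwid'
      linarith
    have h2 : val b τ' - val b σ' ≤ (1 + ((b:ℝ)-1)⁻¹)/(b:ℝ)^(m+1) := by
      rw [ezγ]
      exact div_le_div_of_nonneg_right h1 (by positivity) |>.trans (le_refl _)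
    have h3 : (1 + ((b:ℝ)-1)⁻¹)/(b:ℝ)^(m+1) ≤ (1 + ((b:ℝ)-1)⁻¹)/(b:ℝ)^(j+2) := by
      apply div_le_div_of_nonneg_left (by linarith) (by positivity)
      exact pow_le_pow_right₀ hy1 (by omega)
    have h4 : (1 + ((b:ℝ)-1)⁻¹)/(b:ℝ)^(j+2) = ((b:ℝ)-1)⁻¹/(b:ℝ)^(j+1) := by
      rw [← hxy, mul_comm (b:ℝ) _, pow_succ]
      exact mul_div_mul_right _ _ (ne_of_gt hy)
    rw [h4] at h3
    linarith
  -- prefix force at level j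
  have hpf : ∀ i, i < j → τ' i = q i := by
    apply prefix_force hb hq1 hqb hτ'1 hτ'b j
    · have e1 : ((b:ℝ)-1)⁻¹/(b:ℝ)^j = (((b:ℝ)-1)⁻¹ * (b:ℝ))/(b:ℝ)^(j+1) :=
        div_pow_shift hb2 _ j
      rw [e1, mul_comm, hxy]
      have h1 : (1 + ((b:ℝ)-1)⁻¹)/(b:ℝ)^(j+1) ≤ ((c:ℝ) + ((b:ℝ)-1)⁻¹)/(b:ℝ)^(j+1) := by
        apply div_le_div_of_nonneg_right ?_ (by positivity)
        have : (1:ℝ) ≤ (c:ℝ) := by exact_mod_cast hc1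
        linarith
      linarith
    · linarith
  -- m < j or m = j
  rcases Nat.lt_or_ge m j with hmlt | hmge
  · -- m < j : z = valP j q + (1+x)/y^(j+1) ≤ TL
    have ezz : val b τ' = valP b j τ' + ((τ' j : ℝ) + ((b:ℝ)-1)⁻¹)/(b:ℝ)^(j+1) :=
      val_all_bot hb2 hτ'b j (fun i hi => htτ' i (by omega))
    have hτj1 : τ' j = 1 := htτ' j hmlt
    have ePq : valP b j τ' = valP b j q := valP_congr hpf
    rw [ezz, ePq, hτj1] at hcon
    have : ((1:ℕ):ℝ) + ((b:ℝ)-1)⁻¹ ≤ (c:ℝ) + ((b:ℝ)-1)⁻¹ := by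
      have : (1:ℝ) ≤ (c:ℝ) := by exact_mod_cast hc1
      push_cast
      linarith
    have h5 := div_le_div_of_nonneg_right this (by positivity : (0:ℝ) ≤ (b:ℝ)^(j+1))
    linarith
  · have hmeq : m = j := by omega
    subst hmeq
    have ePq : valP b m τ' = valP b m q := valP_congr hpf
    have ez' : val b τ' = valP b m q + ((τ' m : ℝ) + ((b:ℝ)-1)⁻¹)/(b:ℝ)^(m+1) := by
      rw [ez, ePq]
    set w := τ' m with hw
    -- c < w
    have hcw : c < w := by
      rw [ez'] at hcon
      have h5 : ((c:ℝ) + ((b:ℝ)-1)⁻¹)/(b:ℝ)^(m+1) < ((w:ℝ) + ((b:ℝ)-1)⁻¹)/(b:ℝ)^(m+1) := by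
        linarith
      have h6 := (div_lt_div_iff_of_pos_right (by positivity : (0:ℝ) < (b:ℝ)^(m+1))).mp h5
      have : (c:ℝ) < (w:ℝ) := by linarith
      exact_mod_cast this
    -- the gap must have width 2
    have hd2 : τ' m = σ' m + 2 := by
      have halt : τ' m = σ' m + 1 ∨ τ' m = σ' m + 2 := by omega
      rcases halt with h | h
      · exfalso
        have : val b τ' - val b σ' = ((b:ℝ)-1)⁻¹/(b:ℝ)^(m+1) := by
          have hcast : (τ' m : ℝ) = (σ' m : ℝ) + 1 := by exact_mod_cast h
          rw [ezγ, hw, hcast]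
          ring_nf
        linarith [hlen, hΛ, this]
      · exact h
    have hmid : σ' m + 1 ∈ Ms := by
      have h1 : σ' m + 1 ∉ Finset.range b \ Ms := by
        intro hmem
        exact hnomid' _ hmem ⟨by omega, by omega⟩
      have h2 : σ' m + 1 < b := by have := hτ'b m; omega
      by_contra h3
      exact h1 (mem_D_iff.mpr ⟨h2, h3⟩)
    have hwm : w - 1 ∈ Ms := by
      have : w - 1 = σ' m + 1 := by omega
      rw [this]; exact hmid
    exact hdig w hcw hwm (by rw [← ez']; exact hza)

/-- no long gap has its left endpoint in the window `[β, TR)` -/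
lemma gapR (hb : 4 ≤ b) (hMsub : Ms ⊆ Finset.range (b-1)) (h0 : 0 ∈ Ms)
    (hnc : ∀ m ∈ Ms, m + 1 ∉ Ms) {q : ℕ → ℕ} (hq : ∀ i, q i ∈ Finset.range b \ Ms)
    (j c : ℕ) (hc : c ∈ Finset.range b \ Ms) {a β δ z : ℝ}
    (hB_lo : valP b j q + ((b:ℝ)-1)⁻¹/(b:ℝ)^j ≤ β)
    (hΛ : ((b:ℝ)-1)⁻¹/(b:ℝ)^(j+1) < β - a)
    (hdig : ∀ w : ℕ, w < c → w + 1 ∈ Ms →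
      ¬(β ≤ valP b j q + ((w:ℝ)+1)/(b:ℝ)^(j+1)))
    (hz : z ∈ CbD b (Finset.range b \ Ms)) (hδ : δ ∈ CbD b (Finset.range b \ Ms))
    (hzδ : z < δ) (hβz : β ≤ z) (hlen : β - a ≤ δ - z)
    (hioo : Set.Ioo z δ ∩ CbD b (Finset.range b \ Ms) = ∅) :
    valP b j q + ((c:ℝ)+1)/(b:ℝ)^(j+1) ≤ z := by
  have hb2 : 2 ≤ b := by omega
  have hy := ypos hb2
  have hy1 : (1:ℝ) ≤ (b:ℝ) := (ygt1 hb2).le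
  have hx := xpos hb2
  have hx1 := xle1 hb2
  have hxy := ymulx hb2
  have hq1 : ∀ i, 1 ≤ q i := fun i => digit_ge1 h0 (hq i)
  have hqb : ∀ i, q i < b := fun i => digit_ltb (hq i)
  have hc1 : 1 ≤ c := digit_ge1 h0 hc
  have hcb : c < b := digit_ltb hc
  by_contra hcon
  push_neg at hcon
  obtain ⟨σ', hσ', hzval⟩ := mem_CbD_elim hz
  obtain ⟨τ', hτ', hδval⟩ := mem_CbD_elim hδ
  subst hzval hδval
  have hσ'1 : ∀ i, 1 ≤ σ' i := fun i => digit_ge1 h0 (hσ' i)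
  have hσ'b : ∀ i, σ' i < b := fun i => digit_ltb (hσ' i)
  have hτ'1 : ∀ i, 1 ≤ τ' i := fun i => digit_ge1 h0 (hτ' i)
  have hτ'b : ∀ i, τ' i < b := fun i => digit_ltb (hτ' i)
  obtain ⟨m, hpre', hstn', hwid', hnomid', htσ', htτ'⟩ :=
    gap_char hb hMsub h0 hnc hσ' hτ' hzδ hioo
  have ez : val b σ' = valP b m σ' + ((σ' m : ℝ) + 1)/(b:ℝ)^(m+1) :=
    val_all_top hb2 hσ'b m htσ'
  have eδ : val b τ' = valP b m τ' + ((τ' m : ℝ) + ((b:ℝ)-1)⁻¹)/(b:ℝ)^(m+1) :=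
    val_all_bot hb2 hτ'b m htτ'
  have eP' : valP b m σ' = valP b m τ' := valP_congr hpre'
  have ezγ : val b τ' - val b σ'
      = ((τ' m : ℝ) - (σ' m : ℝ) - 1 + ((b:ℝ)-1)⁻¹)/(b:ℝ)^(m+1) := by
    rw [ez, eδ, eP']; ring
  have hmj : m ≤ j := by
    by_contra hm
    push_neg at hm
    have h1 : (τ' m : ℝ) - (σ' m : ℝ) - 1 + ((b:ℝ)-1)⁻¹ ≤ 1 + ((b:ℝ)-1)⁻¹ := by
      have : (τ' m : ℝ) ≤ (σ' m : ℝ) + 2 := by exact_mod_cast hwid'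
      linarith
    have h2 : val b τ' - val b σ' ≤ (1 + ((b:ℝ)-1)⁻¹)/(b:ℝ)^(m+1) := by
      rw [ezγ]
      exact div_le_div_of_nonneg_right h1 (by positivity) |>.trans (le_refl _)
    have h3 : (1 + ((b:ℝ)-1)⁻¹)/(b:ℝ)^(m+1) ≤ (1 + ((b:ℝ)-1)⁻¹)/(b:ℝ)^(j+2) := by
      apply div_le_div_of_nonneg_left (by linarith) (by positivity)
      exact pow_le_pow_right₀ hy1 (by omega)
    have h4 : (1 + ((b:ℝ)-1)⁻¹)/(b:ℝ)^(j+2) = ((b:ℝ)-1)⁻¹/(b:ℝ)^(j+1) := by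
      rw [← hxy, mul_comm (b:ℝ) _, pow_succ]
      exact mul_div_mul_right _ _ (ne_of_gt hy)
    rw [h4] at h3
    linarith
  -- prefix force at level j for σ'
  have hpf : ∀ i, i < j → σ' i = q i := by
    apply prefix_force hb hq1 hqb hσ'1 hσ'b j
    · linarith
    · have e1 : (1:ℝ)/(b:ℝ)^j = (1 * (b:ℝ))/(b:ℝ)^(j+1) := div_pow_shift hb2 _ j
      rw [e1, one_mul]
      have h1 : ((c:ℝ) + 1)/(b:ℝ)^(j+1) ≤ (b:ℝ)/(b:ℝ)^(j+1) := by
        apply div_le_div_of_nonneg_right ?_ (by positivity)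
        have : (c:ℝ) + 1 ≤ (b:ℝ) := by exact_mod_cast hcb
        linarith
      linarith
  rcases Nat.lt_or_ge m j with hmlt | hmge
  · -- m < j : z = valP j q + 1/y^j ≥ TR
    have ezz : val b σ' = valP b j σ' + ((σ' j : ℝ) + 1)/(b:ℝ)^(j+1) :=
      val_all_top hb2 hσ'b j (fun i hi => htσ' i (by omega))
    have hσj : σ' j = b - 1 := htσ' j hmlt
    have ePq : valP b j σ' = valP b j q := valP_congr hpf
    rw [ezz, ePq, hσj] at hcon
    have hcast : ((b - 1 : ℕ):ℝ) + 1 = (b:ℝ) := by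
      rw [Nat.cast_sub (by omega)]
      ring
    rw [hcast] at hcon
    have h1 : ((c:ℝ) + 1)/(b:ℝ)^(j+1) ≤ (b:ℝ)/(b:ℝ)^(j+1) := by
      apply div_le_div_of_nonneg_right ?_ (by positivity)
      have : (c:ℝ) + 1 ≤ (b:ℝ) := by exact_mod_cast hcb
      linarith
    linarith
  · have hmeq : m = j := by omega
    subst hmeq
    have ePq : valP b m σ' = valP b m q := valP_congr hpf
    have ez' : val b σ' = valP b m q + ((σ' m : ℝ) + 1)/(b:ℝ)^(m+1) := by
      rw [ez, ePq]
    set w := σ' m with hw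
    have hcw : w < c := by
      rw [ez'] at hcon
      have h5 : ((w:ℝ) + 1)/(b:ℝ)^(m+1) < ((c:ℝ) + 1)/(b:ℝ)^(m+1) := by linarith
      have h6 := (div_lt_div_iff_of_pos_right (by positivity : (0:ℝ) < (b:ℝ)^(m+1))).mp h5
      have : (w:ℝ) < (c:ℝ) := by linarith
      exact_mod_cast this
    have hd2 : τ' m = σ' m + 2 := by
      have halt : τ' m = σ' m + 1 ∨ τ' m = σ' m + 2 := by omega
      rcases halt with h | h
      · exfalso
        have : val b τ' - val b σ' = ((b:ℝ)-1)⁻¹/(b:ℝ)^(m+1) := by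
          have hcast : (τ' m : ℝ) = (σ' m : ℝ) + 1 := by exact_mod_cast h
          rw [ezγ, hw, hcast]
          ring_nf
        linarith [hlen, hΛ, this]
      · exact h
    have hmid : σ' m + 1 ∈ Ms := by
      have h1 : σ' m + 1 ∉ Finset.range b \ Ms := by
        intro hmem
        exact hnomid' _ hmem ⟨by omega, by omega⟩
      have h2 : σ' m + 1 < b := by have := hτ'b m; omega
      by_contra h3
      exact h1 (mem_D_iff.mpr ⟨h2, h3⟩)
    exact hdig w hcw hmid (by rw [← ez']; exact hβz)

end Part6


open ThickAux Part2 Part3 Part4 Part5 Part6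

/-- If the missing-digit set `Ms ⊆ {0,…,b-2}` contains `0`, has no two consecutive
integers, and its complement `D = {0,…,b-1} \ Ms` is a union of blocks of consecutive
integers of length at least `b·r`, then `τ(C_{b,D}) ≥ r(b-2)`. -/
theorem thickness_CbD_ge (b : ℕ) (hb : 4 ≤ b) (r : ℝ) (hr : r ∈ Set.Ico (1 / (b : ℝ)) 1)
    (Ms : Finset ℕ) (hMsub : Ms ⊆ Finset.range (b - 1)) (h0 : 0 ∈ Ms)
    (hnc : ∀ m ∈ Ms, m + 1 ∉ Ms)
    (hblocks : ∀ d ∈ Finset.range b \ Ms, ∃ a l : ℕ,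
      (b : ℝ) * r ≤ (l : ℝ) ∧ d ∈ Finset.Ico a (a + l) ∧
      Finset.Ico a (a + l) ⊆ Finset.range b \ Ms) :
    r * ((b : ℝ) - 2) ≤ thickness (CbD b (Finset.range b \ Ms)) := by
  classical
  have hb2 : 2 ≤ b := by omega
  have hy := ypos hb2
  have hyR : (4:ℝ) ≤ (b:ℝ) := by exact_mod_cast hb
  have hy1 : (1:ℝ) ≤ (b:ℝ) := by linarith
  have hx := xpos hb2
  have hx1 := xle1 hb2
  have hxy := ymulx hb2
  obtain ⟨hr1, hr2⟩ := hr
  have hbddB : BddBelow (CbD b (Finset.range b \ Ms)) := BddBelow.mono CbD_sub_Icc bddBelow_Icc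
  have hbddA : BddAbove (CbD b (Finset.range b \ Ms)) := BddAbove.mono CbD_sub_Icc bddAbove_Icc
  -- largest missing digit
  have hMsne : Ms.Nonempty := ⟨0, h0⟩
  have hsmem : Ms.max' hMsne ∈ Ms := Finset.max'_mem _ _
  set s := Ms.max' hMsne with hs_def
  have hsle : ∀ m ∈ Ms, m ≤ s := fun m hm => Finset.le_max' _ _ hm
  have hsb : s < b - 1 := Finset.mem_range.mp (hMsub hsmem)
  have hsD : s + 1 ∈ Finset.range b \ Ms := mem_D_iff.mpr ⟨by omega, hnc s hsmem⟩
  -- top block: b*r ≤ b - 1 - s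
  have hstop : (b:ℝ) * r ≤ (b:ℝ) - 1 - (s:ℝ) := by
    have hd1 : (b - 1) + 1 ∉ Finset.range b \ Ms := by
      intro h; have := digit_ltb h; omega
    obtain ⟨a0, ha01, ha0d, hbr, hblk⟩ :=
      block_top hb ⟨hr1, hr2⟩ h0 hblocks (top_mem hb hMsub) hd1
    have hsa0 : s + 1 ≤ a0 := by
      by_contra hcon2
      push_neg at hcon2
      have hmem : s ∈ Finset.range b \ Ms := hblk s (by omega) (by omega)
      exact (Finset.mem_sdiff.mp hmem).2 hsmem
    have hc1 : ((b-1:ℕ):ℝ) = (b:ℝ) - 1 := by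
      rw [Nat.cast_sub (by omega)]; norm_num
    rw [hc1] at hbr
    have hc2 : (s:ℝ) + 1 ≤ (a0:ℝ) := by exact_mod_cast hsa0
    linarith
  -- least missing digit ≥ 1 (or b)
  set M1 : ℕ := if h : (Ms.erase 0).Nonempty then (Ms.erase 0).min' h else b with hM1_def
  have hM1b : M1 ≤ b := by
    rw [hM1_def]; split
    · next h =>
        have h1 := Finset.mem_range.mp (hMsub (Finset.mem_of_mem_erase (Finset.min'_mem _ h)))
        omega
    · exact le_refl b
  have hM12 : 2 ≤ M1 := by
    rw [hM1_def]; split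
    · next h =>
        have hmm := Finset.min'_mem _ h
        have h1 : (Ms.erase 0).min' h ≠ 0 := Finset.ne_of_mem_erase hmm
        have h2 : (Ms.erase 0).min' h ≠ 1 := by
          intro e
          have h3 : (1:ℕ) ∈ Ms := by rw [← e]; exact Finset.mem_of_mem_erase hmm
          have h4 : (1:ℕ) ∉ Ms := by have := hnc 0 h0; simpa using this
          exact h4 h3
        omega
    · omega
  have hM1min : ∀ m ∈ Ms, 1 ≤ m → M1 ≤ m := by
    intro m hm h1
    have hme : m ∈ Ms.erase 0 := Finset.mem_erase.mpr ⟨by omega, hm⟩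
    have hne : (Ms.erase 0).Nonempty := ⟨m, hme⟩
    rw [hM1_def, dif_pos hne]
    exact Finset.min'_le _ _ hme
  have hM1D : M1 - 1 ∈ Finset.range b \ Ms := by
    apply mem_D_iff.mpr
    refine ⟨by omega, ?_⟩
    intro hmem
    have := hM1min _ hmem (by omega)
    omega
  have hM1r : (b:ℝ) * r ≤ (M1:ℝ) - 1 := by
    rw [hM1_def]
    split
    · next hne =>
        have h1D := one_mem hb h0 hnc
        have h0D : (1:ℕ) - 1 ∉ Finset.range b \ Ms := by
          intro h
          exact (Finset.mem_sdiff.mp h).2 h0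
        obtain ⟨l, hl1, hlb, hbrl, hblk'⟩ :=
          block_bot hb ⟨hr1, hr2⟩ h0 hblocks h1D h0D (le_refl 1)
        have hMm := Finset.min'_mem _ hne
        have hM1Ms : (Ms.erase 0).min' hne ∈ Ms := Finset.mem_of_mem_erase hMm
        have hM1ge1 : 1 ≤ (Ms.erase 0).min' hne := by
          have := Finset.ne_of_mem_erase hMm; omega
        have hnotD : (Ms.erase 0).min' hne ∉ Finset.range b \ Ms :=
          fun h => (Finset.mem_sdiff.mp h).2 hM1Ms
        have hge : 1 + l ≤ (Ms.erase 0).min' hne := by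
          by_contra hcon2
          push_neg at hcon2
          exact hnotD (hblk' _ hM1ge1 hcon2)
        have hcast : (l:ℝ) + 1 ≤ ((Ms.erase 0).min' hne : ℝ) := by exact_mod_cast by omega
        linarith
    · next =>
        have hs0 : (0:ℝ) ≤ (s:ℝ) := Nat.cast_nonneg s
        linarith
  -- nonemptiness of the gap set
  have hd0 : ∃ d0, d0 ∈ Finset.range b \ Ms ∧ d0 + 1 ≤ b - 1 ∧
      (∀ e ∈ Finset.range b \ Ms, ¬(d0 < e ∧ e < b - 1)) := by
    by_cases hc : b - 2 ∈ Finset.range b \ Ms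
    · refine ⟨b-2, hc, by omega, ?_⟩
      intro e he hee
      omega
    · have hm : b - 2 ∈ Ms := by
        by_contra h
        exact hc (mem_D_iff.mpr ⟨by omega, h⟩)
      have h3 : b - 3 ∉ Ms := by
        intro h
        have := hnc _ h
        rw [show b-3+1 = b-2 by omega] at this
        exact this hm
      refine ⟨b-3, mem_D_iff.mpr ⟨by omega, h3⟩, by omega, ?_⟩
      intro e he hee
      have : e = b - 2 := by omega
      exact hc (this ▸ he)
  obtain ⟨d0, hd0D, hd0lt, hd0mid⟩ := hd0
  have hσ0D : ∀ i, (fun i => if i = 0 then d0 else b - 1) i ∈ Finset.range b \ Ms := by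
    intro i; dsimp only; split
    · exact hd0D
    · exact top_mem hb hMsub
  have hτ0D : ∀ i, (fun i => if i = 0 then b - 1 else 1) i ∈ Finset.range b \ Ms := by
    intro i; dsimp only; split
    · exact top_mem hb hMsub
    · exact one_mem hb h0 hnc
  obtain ⟨hlt0, hioo0⟩ := mk_gap hb h0 0 hσ0D hτ0D
    (fun i hi => absurd hi (by omega))
    (by show (if (0:ℕ) = 0 then d0 else b - 1) < (if (0:ℕ) = 0 then b - 1 else 1)
        rw [if_pos rfl, if_pos rfl]; omega)
    (by intro e he hee; exact hd0mid e he (by simpa using hee))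
    (by intro i hi; have h' : i ≠ 0 := by omega
        simp only [if_neg h'])
    (by intro i hi; have h' : i ≠ 0 := by omega
        simp only [if_neg h'])
  unfold thickness
  apply le_csInf
  · exact ⟨_, ⟨_, _, val_mem_CbD hb h0 hσ0D, val_mem_CbD hb h0 hτ0D, hlt0, hioo0, rfl⟩⟩
  -- main bound
  rintro t ⟨a, β, haC, hβC, hab, hgap, ht⟩
  subst ht
  obtain ⟨σ, hσD, haval⟩ := mem_CbD_elim haC
  obtain ⟨τ, hτD, hβval⟩ := mem_CbD_elim hβC
  subst haval hβval
  have hσ1 : ∀ i, 1 ≤ σ i := fun i => digit_ge1 h0 (hσD i)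
  have hσb : ∀ i, σ i < b := fun i => digit_ltb (hσD i)
  have hτ1 : ∀ i, 1 ≤ τ i := fun i => digit_ge1 h0 (hτD i)
  have hτb : ∀ i, τ i < b := fun i => digit_ltb (hτD i)
  obtain ⟨n, hpre, hstn, hwid, hnomid, htσ, htτ⟩ :=
    gap_char hb hMsub h0 hnc hσD hτD hab hgap
  have ea : val b σ = valP b n σ + ((σ n:ℝ)+1)/(b:ℝ)^(n+1) := val_all_top hb2 hσb n htσ
  have eβ0 : val b τ = valP b n τ + ((τ n:ℝ)+((b:ℝ)-1)⁻¹)/(b:ℝ)^(n+1) :=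
    val_all_bot hb2 hτb n htτ
  have ePτσ : valP b n τ = valP b n σ := valP_congr (fun i hi => (hpre i hi).symm)
  have eβ : val b τ = valP b n σ + ((τ n:ℝ)+((b:ℝ)-1)⁻¹)/(b:ℝ)^(n+1) := by
    rw [eβ0, ePτσ]
  have e_ba : val b τ - val b σ
      = ((τ n:ℝ) - (σ n:ℝ) - 1 + ((b:ℝ)-1)⁻¹)/(b:ℝ)^(n+1) := by
    rw [ea, eβ]; ring
  have hbapos : (0:ℝ) < val b τ - val b σ := by linarith
  have ea' : val b σ = valP b (n+1) σ + 1/(b:ℝ)^(n+1) := by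
    rw [ea, valP_succ]; ring
  have eβ' : val b τ = valP b (n+1) τ + ((b:ℝ)-1)⁻¹/(b:ℝ)^(n+1) := by
    rw [eβ0, valP_succ]; ring
  -- reduce to the construction of stopping points
  suffices h : ∃ TL TR : ℝ, TL ∈ CbD b (Finset.range b \ Ms) ∧ TR ∈ CbD b (Finset.range b \ Ms) ∧
      (∀ z ∈ {d : ℝ | ∃ c : ℝ, c ∈ CbD b (Finset.range b \ Ms) ∧ d ∈ CbD b (Finset.range b \ Ms) ∧
          c < d ∧ d ≤ val b σ ∧ val b τ - val b σ ≤ d - c ∧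
          Set.Ioo c d ∩ CbD b (Finset.range b \ Ms) = ∅}, z ≤ TL) ∧
      (∀ z ∈ {c : ℝ | ∃ d : ℝ, c ∈ CbD b (Finset.range b \ Ms) ∧ d ∈ CbD b (Finset.range b \ Ms) ∧
          c < d ∧ val b τ ≤ c ∧ val b τ - val b σ ≤ d - c ∧
          Set.Ioo c d ∩ CbD b (Finset.range b \ Ms) = ∅}, TR ≤ z) ∧
      r*((b:ℝ)-2)*(val b τ - val b σ) ≤ val b σ - TL ∧
      r*((b:ℝ)-2)*(val b τ - val b σ) ≤ TR - val b τ by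
    obtain ⟨TL, TR, hTLC, hTRC, hSL, hSR, hKL, hKR⟩ := h
    have h1 : sSup (insert (sInf (CbD b (Finset.range b \ Ms)))
        {d : ℝ | ∃ c : ℝ, c ∈ CbD b (Finset.range b \ Ms) ∧ d ∈ CbD b (Finset.range b \ Ms) ∧
          c < d ∧ d ≤ val b σ ∧ val b τ - val b σ ≤ d - c ∧
          Set.Ioo c d ∩ CbD b (Finset.range b \ Ms) = ∅}) ≤ TL := by
      apply csSup_le (Set.insert_nonempty _ _)
      rintro z hz
      rcases Set.mem_insert_iff.mp hz with rfl | hz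
      · exact csInf_le hbddB hTLC
      · exact hSL z hz
    have h2 : TR ≤ sInf (insert (sSup (CbD b (Finset.range b \ Ms)))
        {c : ℝ | ∃ d : ℝ, c ∈ CbD b (Finset.range b \ Ms) ∧ d ∈ CbD b (Finset.range b \ Ms) ∧
          c < d ∧ val b τ ≤ c ∧ val b τ - val b σ ≤ d - c ∧
          Set.Ioo c d ∩ CbD b (Finset.range b \ Ms) = ∅}) := by
      apply le_csInf (Set.insert_nonempty _ _)
      rintro z hz
      rcases Set.mem_insert_iff.mp hz with rfl | hz
      · exact le_csSup hbddA hTRC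
      · exact hSR z hz
    rw [le_div_iff₀ hbapos]
    apply le_min
    · linarith
    · linarith
  -- case split on the digit jump
  have hgcase : τ n = σ n + 1 ∨ τ n = σ n + 2 := by omega
  rcases hgcase with hA | hB
  · -- CASE A : adjacent digits
    have hba : val b τ - val b σ = ((b:ℝ)-1)⁻¹/(b:ℝ)^(n+1) := by
      rw [e_ba, hA]; push_cast; ring
    -- TL
    have hσLD : ∀ i, (fun i => if i ≤ n then σ i else if i = n+1 then s+1 else 1) i
        ∈ Finset.range b \ Ms := by
      intro i; dsimp only; split
      · exact hσD i
      · split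
        · exact hsD
        · exact one_mem hb h0 hnc
    have eTL : val b (fun i => if i ≤ n then σ i else if i = n+1 then s+1 else 1)
        = valP b (n+1) σ + (((s+1:ℕ):ℝ) + ((b:ℝ)-1)⁻¹)/(b:ℝ)^(n+2) := by
      have h1 := val_all_bot hb2 (fun i => digit_ltb (hσLD i)) (n+1)
        (fun i hi => by rw [if_neg (by omega), if_neg (by omega)])
      have h2 : (if n+1 ≤ n then σ (n+1) else if n+1 = n+1 then s+1 else 1) = s+1 := by
        rw [if_neg (by omega), if_pos rfl]
      have h3 : valP b (n+1) (fun i => if i ≤ n then σ i else if i = n+1 then s+1 else 1)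
          = valP b (n+1) σ := valP_congr (fun i hi => by rw [if_pos (by omega)])
      rw [h1, h2, h3]
    -- TR
    have hτRD : ∀ i, (fun i => if i ≤ n then τ i else if i = n+1 then M1-1 else b-1) i
        ∈ Finset.range b \ Ms := by
      intro i; dsimp only; split
      · exact hτD i
      · split
        · exact hM1D
        · exact top_mem hb hMsub
    have eTR : val b (fun i => if i ≤ n then τ i else if i = n+1 then M1-1 else b-1)
        = valP b (n+1) τ + (((M1-1:ℕ):ℝ) + 1)/(b:ℝ)^(n+2) := by
      have h1 := val_all_top hb2 (fun i => digit_ltb (hτRD i)) (n+1)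
        (fun i hi => by rw [if_neg (by omega), if_neg (by omega)])
      have h2 : (if n+1 ≤ n then τ (n+1) else if n+1 = n+1 then M1-1 else b-1) = M1-1 := by
        rw [if_neg (by omega), if_pos rfl]
      have h3 : valP b (n+1) (fun i => if i ≤ n then τ i else if i = n+1 then M1-1 else b-1)
          = valP b (n+1) τ := valP_congr (fun i hi => by rw [if_pos (by omega)])
      rw [h1, h2, h3]
    have hΛA : ((b:ℝ)-1)⁻¹/(b:ℝ)^(n+2) < val b τ - val b σ := by
      rw [hba]
      apply div_lt_div_of_pos_left hx (by positivity)
      have h1 : (b:ℝ)^(n+1) * 1 < (b:ℝ)^(n+1) * (b:ℝ) :=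
        mul_lt_mul_of_pos_left (ygt1 hb2) (by positivity)
      rw [mul_one, ← pow_succ] at h1
      exact h1
    refine ⟨_, _, val_mem_CbD hb h0 hσLD, val_mem_CbD hb h0 hτRD, ?_, ?_, ?_, ?_⟩
    · -- SL bound
      rintro z ⟨γ, hγC, hzC, hγz, hza, hlen, hioo⟩
      rw [eTL]
      have := gapL hb hMsub h0 hnc hσD (n+1) (s+1) hsD
        (le_of_eq ea') hΛA ?_ hγC hzC hγz hza hlen hioo
      · exact this
      · intro w hw hwm
        intro _
        have := hsle _ hwm
        omega
    · -- SR bound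
      rintro z ⟨δ, hzC, hδC, hzδ, hβz, hlen, hioo⟩
      rw [eTR]
      have := gapR hb hMsub h0 hnc hτD (n+1) (M1-1) hM1D
        (le_of_eq eβ'.symm) hΛA ?_ hzC hδC hzδ hβz hlen hioo
      · exact this
      · intro w hw hwm
        intro _
        have := hM1min _ hwm (by omega)
        omega
    · -- arithmetic, left
      have AK := arith_key hyR hr1 hr2 hstop
      rw [hba, ea', eTL]
      have e2 : (1:ℝ)/(b:ℝ)^(n+1) = ((b:ℝ))/(b:ℝ)^(n+2) := by
        rw [div_pow_shift hb2 1 (n+1), one_mul]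
      have e4 : (valP b (n+1) σ + 1/(b:ℝ)^(n+1))
          - (valP b (n+1) σ + (((s+1:ℕ):ℝ) + ((b:ℝ)-1)⁻¹)/(b:ℝ)^(n+2))
          = ((b:ℝ) - (((s+1:ℕ):ℝ) + ((b:ℝ)-1)⁻¹))/(b:ℝ)^(n+2) := by
        rw [e2]; ring
      have e3 : r*((b:ℝ)-2)*(((b:ℝ)-1)⁻¹/(b:ℝ)^(n+1))
          = (r*((b:ℝ)-2)*((b:ℝ)-1)⁻¹*(b:ℝ))/(b:ℝ)^(n+2) := by
        rw [← mul_div_assoc, div_pow_shift hb2 _ (n+1)]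
      rw [e4, e3]
      apply div_le_div_of_nonneg_right ?_ (by positivity)
      push_cast
      linarith
    · -- arithmetic, right
      have AK2 := arith_key hyR hr1 hr2 hM1r
      rw [hba, eβ', eTR]
      have e2 : ((b:ℝ)-1)⁻¹/(b:ℝ)^(n+1) = (((b:ℝ)-1)⁻¹*(b:ℝ))/(b:ℝ)^(n+2) :=
        div_pow_shift hb2 _ (n+1)
      have e4 : (valP b (n+1) τ + (((M1-1:ℕ):ℝ) + 1)/(b:ℝ)^(n+2))
          - (valP b (n+1) τ + ((b:ℝ)-1)⁻¹/(b:ℝ)^(n+1))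
          = ((((M1-1:ℕ):ℝ) + 1) - ((b:ℝ)-1)⁻¹*(b:ℝ))/(b:ℝ)^(n+2) := by
        rw [e2]; ring
      have e3 : r*((b:ℝ)-2)*(((b:ℝ)-1)⁻¹/(b:ℝ)^(n+1))
          = (r*((b:ℝ)-2)*((b:ℝ)-1)⁻¹*(b:ℝ))/(b:ℝ)^(n+2) := by
        rw [← mul_div_assoc, div_pow_shift hb2 _ (n+1)]
      rw [e4, e3]
      apply div_le_div_of_nonneg_right ?_ (by positivity)
      rw [Nat.cast_sub (by omega : 1 ≤ M1), mul_comm (((b:ℝ)-1)⁻¹) (b:ℝ), hxy]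
      linarith
  · -- CASE B : one missing digit between
    have hba : val b τ - val b σ = (1 + ((b:ℝ)-1)⁻¹)/(b:ℝ)^(n+1) := by
      rw [e_ba, hB]; push_cast; ring
    have hmidD : σ n + 1 ∉ Finset.range b \ Ms := by
      intro h
      exact hnomid _ h ⟨by omega, by omega⟩
    obtain ⟨a0, ha01, ha0d, hbr, hblk⟩ :=
      block_top hb ⟨hr1, hr2⟩ h0 hblocks (hσD n) hmidD
    have ha0D : a0 ∈ Finset.range b \ Ms := hblk a0 (le_refl _) ha0d
    have hd1' : τ n - 1 ∉ Finset.range b \ Ms := by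
      intro h
      exact hnomid _ h ⟨by omega, by omega⟩
    obtain ⟨l', hl'1, hl'b, hbrl', hblk'⟩ :=
      block_bot hb ⟨hr1, hr2⟩ h0 hblocks (hτD n) hd1' (by omega)
    have hcRD : τ n + l' - 1 ∈ Finset.range b \ Ms := hblk' _ (by omega) (by omega)
    -- TL
    have hσLD : ∀ i, (fun i => if i < n then σ i else if i = n then a0 else 1) i
        ∈ Finset.range b \ Ms := by
      intro i; dsimp only; split
      · exact hσD i
      · split
        · exact ha0D
        · exact one_mem hb h0 hnc
    have eTL : val b (fun i => if i < n then σ i else if i = n then a0 else 1)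
        = valP b n σ + ((a0:ℝ) + ((b:ℝ)-1)⁻¹)/(b:ℝ)^(n+1) := by
      have h1 := val_all_bot hb2 (fun i => digit_ltb (hσLD i)) n
        (fun i hi => by rw [if_neg (by omega), if_neg (by omega)])
      have h2 : (if n < n then σ n else if n = n then a0 else 1) = a0 := by
        rw [if_neg (by omega), if_pos rfl]
      have h3 : valP b n (fun i => if i < n then σ i else if i = n then a0 else 1)
          = valP b n σ := valP_congr (fun i hi => by rw [if_pos hi])
      rw [h1, h2, h3]
    -- TR
    have hτRD : ∀ i, (fun i => if i < n then τ i else if i = n then τ n + l' - 1 else b-1) i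
        ∈ Finset.range b \ Ms := by
      intro i; dsimp only; split
      · exact hτD i
      · split
        · exact hcRD
        · exact top_mem hb hMsub
    have eTR : val b (fun i => if i < n then τ i else if i = n then τ n + l' - 1 else b-1)
        = valP b n τ + (((τ n + l' - 1:ℕ):ℝ) + 1)/(b:ℝ)^(n+1) := by
      have h1 := val_all_top hb2 (fun i => digit_ltb (hτRD i)) n
        (fun i hi => by rw [if_neg (by omega), if_neg (by omega)])
      have h2 : (if n < n then τ n else if n = n then τ n + l' - 1 else b-1)
          = τ n + l' - 1 := by
        rw [if_neg (by omega), if_pos rfl]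
      have h3 : valP b n (fun i => if i < n then τ i else if i = n then τ n + l' - 1 else b-1)
          = valP b n τ := valP_congr (fun i hi => by rw [if_pos hi])
      rw [h1, h2, h3]
    have hΛB : ((b:ℝ)-1)⁻¹/(b:ℝ)^(n+1) < val b τ - val b σ := by
      rw [hba]
      apply div_lt_div_of_pos_right (by linarith) (by positivity)
    refine ⟨_, _, val_mem_CbD hb h0 hσLD, val_mem_CbD hb h0 hτRD, ?_, ?_, ?_, ?_⟩
    · -- SL bound
      rintro z ⟨γ, hγC, hzC, hγz, hza, hlen, hioo⟩
      rw [eTL]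
      have hA_up : val b σ ≤ valP b n σ + 1/(b:ℝ)^n := by
        rw [ea]
        have h1 : ((σ n:ℝ)+1)/(b:ℝ)^(n+1) ≤ (b:ℝ)/(b:ℝ)^(n+1) := by
          apply div_le_div_of_nonneg_right ?_ (by positivity)
          exact_mod_cast hσb n
        have e2 : (1:ℝ)/(b:ℝ)^n = ((b:ℝ))/(b:ℝ)^(n+1) := by
          rw [div_pow_shift hb2 1 n, one_mul]
        rw [e2]
        linarith
      have := gapL hb hMsub h0 hnc hσD n a0 ha0D hA_up hΛB ?_ hγC hzC hγz hza hlen hioo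
      · exact this
      · intro w hw hwm hval
        rw [ea] at hval
        have h5 : ((w:ℝ) + ((b:ℝ)-1)⁻¹)/(b:ℝ)^(n+1) ≤ ((σ n:ℝ)+1)/(b:ℝ)^(n+1) := by
          linarith
        have h6 := (div_le_div_iff_of_pos_right (by positivity : (0:ℝ) < (b:ℝ)^(n+1))).mp h5
        have h7 : (w:ℝ) < (σ n:ℝ) + 1 := by linarith
        have h8 : w ≤ σ n := by
          have : w < σ n + 1 := by exact_mod_cast h7
          omega
        have h9 : w - 1 ∈ Finset.range b \ Ms := hblk (w-1) (by omega) (by omega)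
        exact (Finset.mem_sdiff.mp h9).2 hwm
    · -- SR bound
      rintro z ⟨δ, hzC, hδC, hzδ, hβz, hlen, hioo⟩
      rw [eTR]
      have hB_lo : valP b n τ + ((b:ℝ)-1)⁻¹/(b:ℝ)^n ≤ val b τ := by
        rw [eβ0]
        have e2 : ((b:ℝ)-1)⁻¹/(b:ℝ)^n = (((b:ℝ)-1)⁻¹*(b:ℝ))/(b:ℝ)^(n+1) :=
          div_pow_shift hb2 _ n
        rw [e2, mul_comm, hxy]
        have h1 : (1+((b:ℝ)-1)⁻¹)/(b:ℝ)^(n+1) ≤ ((τ n:ℝ)+((b:ℝ)-1)⁻¹)/(b:ℝ)^(n+1) := by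
          apply div_le_div_of_nonneg_right ?_ (by positivity)
          have : (1:ℝ) ≤ (τ n:ℝ) := by exact_mod_cast hτ1 n
          linarith
        linarith
      have := gapR hb hMsub h0 hnc hτD n (τ n + l' - 1) hcRD hB_lo hΛB ?_ hzC hδC hzδ hβz hlen hioo
      · exact this
      · intro w hw hwm hval
        rw [eβ0] at hval
        have h5 : ((τ n:ℝ)+((b:ℝ)-1)⁻¹)/(b:ℝ)^(n+1) ≤ ((w:ℝ)+1)/(b:ℝ)^(n+1) := by
          linarith
        have h6 := (div_le_div_iff_of_pos_right (by positivity : (0:ℝ) < (b:ℝ)^(n+1))).mp h5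
        have h7 : (τ n:ℝ) < (w:ℝ) + 1 := by linarith
        have h8 : τ n ≤ w := by
          have : τ n < w + 1 := by exact_mod_cast h7
          omega
        have h9 : w + 1 ∈ Finset.range b \ Ms := hblk' (w+1) (by omega) (by omega)
        exact (Finset.mem_sdiff.mp h9).2 hwm
    · -- arithmetic, left
      have AK := arith_key hyR hr1 hr2 hbr
      rw [hba, ea, eTL]
      have e4 : (valP b n σ + ((σ n:ℝ)+1)/(b:ℝ)^(n+1))
          - (valP b n σ + ((a0:ℝ) + ((b:ℝ)-1)⁻¹)/(b:ℝ)^(n+1))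
          = (((σ n:ℝ)+1) - ((a0:ℝ) + ((b:ℝ)-1)⁻¹))/(b:ℝ)^(n+1) := by
        ring
      rw [e4, ← mul_div_assoc]
      apply div_le_div_of_nonneg_right ?_ (by positivity)
      have e5 : r*((b:ℝ)-2)*(1+((b:ℝ)-1)⁻¹) = r*((b:ℝ)-2)*((b:ℝ)-1)⁻¹*(b:ℝ) := by
        rw [← hxy]; ring
      rw [e5]
      linarith
    · -- arithmetic, right
      have AK2 := arith_key hyR hr1 hr2 hbrl'
      rw [hba, eβ0, eTR]
      have e4 : (valP b n τ + (((τ n + l' - 1:ℕ):ℝ) + 1)/(b:ℝ)^(n+1))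
          - (valP b n τ + ((τ n:ℝ)+((b:ℝ)-1)⁻¹)/(b:ℝ)^(n+1))
          = ((((τ n + l' - 1:ℕ):ℝ) + 1) - ((τ n:ℝ)+((b:ℝ)-1)⁻¹))/(b:ℝ)^(n+1) := by
        ring
      rw [e4, ← mul_div_assoc]
      apply div_le_div_of_nonneg_right ?_ (by positivity)
      have e5 : r*((b:ℝ)-2)*(1+((b:ℝ)-1)⁻¹) = r*((b:ℝ)-2)*((b:ℝ)-1)⁻¹*(b:ℝ) := by
        rw [← hxy]; ring
      rw [e5]
      rw [Nat.cast_sub (by omega : 1 ≤ τ n + l'), Nat.cast_add]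
      linarith
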